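/- Let d ≥ 2. Let (e_{J,i}) for J = 1,…,d+1 and i = 1,…,d be a complete set of mutually unbiased bases of ℂ^d: for each J, (e_{J,i})_{i=1}^d is an orthonormal basis of ℂ^d, and |⟨e_{J,i}, e_{J',i'}⟩|² = 1/d whenever J ≠ J'. Let (L_i^{(J)}) for J = 1,…,d+1 and i = 1,…,d be a complete set of mutually unbiased striations of {1,…,d²}: for each J, (L_i^{(J)})_{i=1}^d is a partition of {1,…,d²} into d sets of cardinality d, and #(L_i^{(J)} ∩ L_{i'}^{(J')}) = 1 whenever J ≠ J'. For each k ∈ {1,…,d²} and each J, let s(k,J) be the unique i with k ∈ L_i^{(J)}. Define A_k := (1/d)·( ∑_{J=1}^{d+1} |e_{J,s(k,J)}⟩⟨e_{J,s(k,J)}| − I ). Then (A_k)_{k=1}^{d²} is a COB on ℂ^d: each A_k is Hermitian, tr(A_k A_{k'}) = (1/d)·δ_{kk'} for all k, k', and ∑_{k=1}^{d²} A_k = I. -/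

import Mathlib

open scoped InnerProductSpace
open Matrix

/-- Auxiliary: the rank-one projection matrix `|v⟩⟨v|`. -/
def projMat {d : ℕ} (v : EuclideanSpace ℂ (Fin d)) : Matrix (Fin d) (Fin d) ℂ :=
  Matrix.vecMulVec v (fun a => (starRingEnd ℂ) (v a))

lemma projMat_herm {d : ℕ} (v : EuclideanSpace ℂ (Fin d)) :
    (projMat v).IsHermitian := by
  ext a b
  simp [projMat, Matrix.conjTranspose_apply, Matrix.vecMulVec_apply, mul_comm]

lemma projMat_trace {d : ℕ} (v : EuclideanSpace ℂ (Fin d)) :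
    (projMat v).trace = ⟪v, v⟫_ℂ := by
  simp [projMat, Matrix.trace, Matrix.vecMulVec_apply, PiLp.inner_apply,
    RCLike.inner_apply, mul_comm]
  have h := inner_self_eq_norm_sq_to_K (𝕜 := ℂ) v
  simp only [PiLp.inner_apply, RCLike.inner_apply] at h
  exact h

lemma projMat_trace_mul {d : ℕ} (u v : EuclideanSpace ℂ (Fin d)) :
    (projMat u * projMat v).trace = ⟪u, v⟫_ℂ * ⟪v, u⟫_ℂ := by
  simp only [projMat, Matrix.trace, Matrix.diag_apply, Matrix.mul_apply,
    Matrix.vecMulVec_apply, PiLp.inner_apply, RCLike.inner_apply]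
  rw [Finset.sum_mul_sum]
  rw [Finset.sum_comm]
  apply Finset.sum_congr rfl; intro i _
  apply Finset.sum_congr rfl; intro a _
  ring

lemma projMat_trace_mul_same {d : ℕ} (e : Fin d → EuclideanSpace ℂ (Fin d))
    (h : Orthonormal ℂ e) (i i' : Fin d) :
    (projMat (e i) * projMat (e i')).trace = if i = i' then 1 else 0 := by
  rw [projMat_trace_mul]
  rw [orthonormal_iff_ite.mp h i i', orthonormal_iff_ite.mp h i' i]
  by_cases hii : i = i' <;> simp [hii, eq_comm]

lemma projMat_trace_mul_unbiased {d : ℕ} (u v : EuclideanSpace ℂ (Fin d))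
    (h : ‖⟪u, v⟫_ℂ‖ ^ 2 = 1 / d) :
    (projMat u * projMat v).trace = 1 / (d : ℂ) := by
  rw [projMat_trace_mul, ← inner_conj_symm u v, mul_comm, Complex.mul_conj]
  rw [Complex.normSq_eq_norm_sq, norm_inner_symm v u, h]
  push_cast
  ring

lemma sum_projMat_eq_one {d : ℕ} (e : Fin d → EuclideanSpace ℂ (Fin d))
    (h : Orthonormal ℂ e) :
    ∑ i, projMat (e i) = 1 := by
  have h1 : (Matrix.of fun a i => e i a)ᴴ * (Matrix.of fun a i => e i a) = 1 := by
    ext i j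
    simp only [Matrix.mul_apply, Matrix.conjTranspose_apply, Matrix.one_apply,
      Matrix.of_apply]
    have := (orthonormal_iff_ite.mp h) i j
    simp only [PiLp.inner_apply, RCLike.inner_apply] at this
    simpa [Matrix.star_apply, mul_comm] using this
  have h2 := mul_eq_one_comm.mp h1
  ext a b
  rw [← h2]
  simp [projMat, Matrix.mul_apply, Matrix.vecMulVec_apply,
    Matrix.conjTranspose_apply, Matrix.sum_apply]

lemma striation_common_line {d : ℕ} (hd : 2 ≤ d)
    (L : Fin (d+1) → Fin d → Finset (Fin (d^2)))
    (hpart : ∀ J k, ∃! i, k ∈ L J i)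
    (hcard : ∀ J i, (L J i).card = d)
    (hmus : ∀ J J' i i', J ≠ J' → (L J i ∩ L J' i').card = 1)
    (s : Fin (d^2) → Fin (d+1) → Fin d)
    (hs : ∀ k J, k ∈ L J (s k J))
    (k k' : Fin (d^2)) (hkk : k ≠ k') :
    (Finset.univ.filter (fun J => s k J = s k' J)).card = 1 := by
  have hmem : ∀ (m : Fin (d^2)) J i, m ∈ L J i ↔ s m J = i := by
    intro m J i
    obtain ⟨i0, hi0, huniq⟩ := hpart J m
    constructor
    · intro h; rw [huniq i h, huniq (s m J) (hs m J)]
    · rintro rfl; exact hs m J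
  have huJ : ∀ J J', s k J = s k' J → s k J' = s k' J' → J = J' := by
    intro J J' h1 h2
    by_contra hne
    have hint := hmus J J' (s k J) (s k J') hne
    obtain ⟨a, ha⟩ := Finset.card_eq_one.mp hint
    have hk : k ∈ L J (s k J) ∩ L J' (s k J') :=
      Finset.mem_inter.mpr ⟨hs k J, hs k J'⟩
    have hk' : k' ∈ L J (s k J) ∩ L J' (s k J') := by
      rw [h1, h2] at *
      exact Finset.mem_inter.mpr ⟨hs k' J, by rw [← h2]; rw [h2]; exact hs k' J'⟩
    rw [ha] at hk hk'
    exact hkk (by rw [Finset.mem_singleton.mp hk, Finset.mem_singleton.mp hk'])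
  have hTcard : ∀ J : Fin (d+1), ((L J (s k J)).erase k).card = d - 1 := by
    intro J; rw [Finset.card_erase_of_mem (hs k J), hcard]
  have hdisj : ∀ J ∈ (Finset.univ : Finset (Fin (d+1))), ∀ J' ∈ Finset.univ,
      J ≠ J' → Disjoint ((L J (s k J)).erase k) ((L J' (s k J')).erase k) := by
    intro J _ J' _ hne
    rw [Finset.disjoint_left]
    intro m hm hm'
    have hint := hmus J J' (s k J) (s k J') hne
    obtain ⟨a, ha⟩ := Finset.card_eq_one.mp hint
    have hk : k ∈ L J (s k J) ∩ L J' (s k J') :=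
      Finset.mem_inter.mpr ⟨hs k J, hs k J'⟩
    have hmm : m ∈ L J (s k J) ∩ L J' (s k J') :=
      Finset.mem_inter.mpr ⟨Finset.mem_of_mem_erase hm, Finset.mem_of_mem_erase hm'⟩
    rw [ha] at hk hmm
    exact (Finset.ne_of_mem_erase hm)
      (by rw [Finset.mem_singleton.mp hmm, Finset.mem_singleton.mp hk])
  have hbU : (Finset.univ.biUnion (fun J => (L J (s k J)).erase k)).card
      = (d+1) * (d-1) := by
    rw [Finset.card_biUnion hdisj]
    simp [hTcard, Finset.sum_const]
  have hsub : Finset.univ.biUnion (fun J => (L J (s k J)).erase k)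
      ⊆ Finset.univ.erase k := by
    intro m hm
    obtain ⟨J, _, hmJ⟩ := Finset.mem_biUnion.mp hm
    exact Finset.mem_erase.mpr ⟨Finset.ne_of_mem_erase hmJ, Finset.mem_univ m⟩
  have hcarde : (Finset.univ.erase k).card = d^2 - 1 := by
    rw [Finset.card_erase_of_mem (Finset.mem_univ k)]
    simp
  have hps : (d+1) * (d-1) = d^2 - 1 := by
    obtain ⟨m, rfl⟩ := Nat.exists_eq_add_of_le hd
    have h1 : 2 + m - 1 = m + 1 := by omega
    have h2 : (2 + m)^2 = (2+m+1)*(m+1) + 1 := by ring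
    rw [h1, h2]; omega
  have hequ : Finset.univ.biUnion (fun J => (L J (s k J)).erase k)
      = Finset.univ.erase k :=
    Finset.eq_of_subset_of_card_le hsub (by rw [hcarde, hbU, hps])
  have hk' : k' ∈ Finset.univ.biUnion (fun J => (L J (s k J)).erase k) := by
    rw [hequ]; exact Finset.mem_erase.mpr ⟨hkk.symm, Finset.mem_univ k'⟩
  obtain ⟨J0, _, hJ0⟩ := Finset.mem_biUnion.mp hk'
  have hsJ0 : s k J0 = s k' J0 :=
    ((hmem k' J0 (s k J0)).mp (Finset.mem_of_mem_erase hJ0)).symm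
  rw [Finset.card_eq_one]
  refine ⟨J0, Finset.eq_singleton_iff_unique_mem.mpr ⟨?_, ?_⟩⟩
  · simp [hsJ0]
  · intro J hJ
    exact huJ J J0 (Finset.mem_filter.mp hJ).2 hsJ0

/-- Construction 3: From a complete set of `d+1` mutually
unbiased bases `(e J i)` of `ℂ^d` and a complete set of `d+1` mutually
unbiased striations `(L J i)` of `{1,…,d²}`, the matrices
`A k := (1/d)(∑_J |e J (s k J)⟩⟨e J (s k J)| - I)` form a COB on `ℂ^d`. -/
theorem mub_mus_construction_is_cob (d : ℕ) (hd : 2 ≤ d)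
    (e : Fin (d + 1) → Fin d → EuclideanSpace ℂ (Fin d))
    (horthb : ∀ J, Orthonormal ℂ (e J))
    (hmub : ∀ J J' i i', J ≠ J' → ‖⟪e J i, e J' i'⟫_ℂ‖ ^ 2 = 1 / d)
    (L : Fin (d + 1) → Fin d → Finset (Fin (d ^ 2)))
    (hpart : ∀ J k, ∃! i, k ∈ L J i)
    (hcard : ∀ J i, (L J i).card = d)
    (hmus : ∀ J J' i i', J ≠ J' → (L J i ∩ L J' i').card = 1)
    (s : Fin (d ^ 2) → Fin (d + 1) → Fin d)
    (hs : ∀ k J, k ∈ L J (s k J))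
    (A : Fin (d ^ 2) → Matrix (Fin d) (Fin d) ℂ)
    (hA : ∀ k, A k = (1 / (d : ℂ)) •
      ((∑ J, Matrix.vecMulVec (e J (s k J))
          (fun a => (starRingEnd ℂ) (e J (s k J) a))) -
        (1 : Matrix (Fin d) (Fin d) ℂ))) :
    (∀ k, (A k).IsHermitian) ∧
    (∀ k k', (A k * A k').trace = if k = k' then (1 / (d : ℂ)) else 0) ∧
    (∑ k, A k = 1) := by
  have hd0 : (d : ℂ) ≠ 0 := Nat.cast_ne_zero.mpr (by omega)
  have hA' : ∀ k, A k = (1 / (d : ℂ)) •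
      ((∑ J, projMat (e J (s k J))) - 1) := hA
  refine ⟨?_, ?_, ?_⟩
  · -- Hermitian
    intro k
    rw [hA' k]
    have h1 : ((∑ J, projMat (e J (s k J))) - 1 :
        Matrix (Fin d) (Fin d) ℂ).IsHermitian := by
      have hsum : (∑ J, projMat (e J (s k J)))ᴴ = ∑ J, projMat (e J (s k J)) := by
        rw [Matrix.conjTranspose_sum]
        exact Finset.sum_congr rfl (fun J _ => projMat_herm _)
      exact Matrix.IsHermitian.sub hsum Matrix.isHermitian_one
    unfold Matrix.IsHermitian
    rw [Matrix.conjTranspose_smul, h1]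
    congr 1
    simp [star_div₀, Complex.star_def]
  · -- trace orthogonality
    intro k k'
    have htr_diag : ∀ J, (projMat (e J (s k J)) * projMat (e J (s k' J))).trace
        = if s k J = s k' J then (1 : ℂ) else 0 :=
      fun J => projMat_trace_mul_same (e J) (horthb J) _ _
    have htr_off : ∀ J J', J ≠ J' →
        (projMat (e J (s k J)) * projMat (e J' (s k' J'))).trace = 1 / (d : ℂ) :=
      fun J J' h => projMat_trace_mul_unbiased _ _ (hmub J J' _ _ h)
    have hrow : ∀ J : Fin (d+1),
        ∑ J', (projMat (e J (s k J)) * projMat (e J' (s k' J'))).trace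
          = (if s k J = s k' J then (1:ℂ) else 0) + 1 := by
      intro J
      rw [← Finset.add_sum_erase _ _ (Finset.mem_univ J), htr_diag J]
      congr 1
      rw [Finset.sum_congr rfl
        (fun J' hJ' => htr_off J J' (Finset.ne_of_mem_erase hJ').symm)]
      rw [Finset.sum_const, Finset.card_erase_of_mem (Finset.mem_univ J),
        Finset.card_univ]
      simp only [Fintype.card_fin, Nat.add_sub_cancel, nsmul_eq_mul]
      field_simp
    have hSS : ∑ J, ∑ J', (projMat (e J (s k J)) * projMat (e J' (s k' J'))).trace
        = ((Finset.univ.filter (fun J => s k J = s k' J)).card : ℂ) + ((d:ℂ) + 1) := by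
      rw [Finset.sum_congr rfl (fun J _ => hrow J), Finset.sum_add_distrib,
        Finset.sum_boole, Finset.sum_const, Finset.card_univ]
      simp
    have htrSk : ∀ m : Fin (d^2), (∑ J, projMat (e J (s m J))).trace = (d:ℂ) + 1 := by
      intro m
      rw [Matrix.trace_sum]
      have htr1 : ∀ J : Fin (d+1), (projMat (e J (s m J))).trace = 1 := by
        intro J
        rw [projMat_trace]
        simpa using orthonormal_iff_ite.mp (horthb J) (s m J) (s m J)
      rw [Finset.sum_congr rfl (fun J _ => htr1 J), Finset.sum_const,
        Finset.card_univ]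
      simp
    have hexp : (A k * A k').trace = (1/(d:ℂ)) * (1/(d:ℂ)) *
        ((∑ J, ∑ J', (projMat (e J (s k J)) * projMat (e J' (s k' J'))).trace)
          - ((d:ℂ)+1) - ((d:ℂ)+1) + (d:ℂ)) := by
      rw [hA' k, hA' k', Matrix.smul_mul, Matrix.mul_smul, smul_smul,
        Matrix.trace_smul]
      have hprod : ((∑ J, projMat (e J (s k J))) - 1) *
          ((∑ J', projMat (e J' (s k' J'))) - 1)
          = (∑ J, projMat (e J (s k J))) * (∑ J', projMat (e J' (s k' J')))
            - (∑ J, projMat (e J (s k J))) - (∑ J', projMat (e J' (s k' J'))) + 1 := by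
        noncomm_ring
      rw [hprod, Matrix.trace_add, Matrix.trace_sub, Matrix.trace_sub,
        Matrix.trace_one, htrSk k, htrSk k']
      have hmulsum : (∑ J, projMat (e J (s k J))) * (∑ J', projMat (e J' (s k' J')))
          = ∑ J, ∑ J', projMat (e J (s k J)) * projMat (e J' (s k' J')) := by
        rw [Finset.sum_mul]
        exact Finset.sum_congr rfl (fun J _ => Finset.mul_sum _ _ _)
      rw [hmulsum]
      rw [Matrix.trace_sum]
      rw [Finset.sum_congr rfl (fun J _ => Matrix.trace_sum _ _)]
      simp [smul_eq_mul]
    by_cases hkk : k = k'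
    · subst hkk
      rw [hexp, hSS]
      have : (Finset.univ.filter (fun J => s k J = s k J)) = Finset.univ := by
        simp
      rw [this, Finset.card_univ, if_pos rfl]
      simp only [Fintype.card_fin]
      push_cast
      field_simp
      try ring
    · rw [hexp, hSS,
        striation_common_line hd L hpart hcard hmus s hs k k' hkk, if_neg hkk]
      push_cast
      ring
  · -- sum to identity
    have hmem : ∀ (m : Fin (d^2)) J i, m ∈ L J i ↔ s m J = i := by
      intro m J i
      obtain ⟨i0, hi0, huniq⟩ := hpart J m
      constructor
      · intro h; rw [huniq i h, huniq (s m J) (hs m J)]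
      · rintro rfl; exact hs m J
    have hfib : ∀ J : Fin (d+1),
        ∑ k, projMat (e J (s k J)) = (d : ℕ) • (1 : Matrix (Fin d) (Fin d) ℂ) := by
      intro J
      rw [← Finset.sum_fiberwise Finset.univ (fun k => s k J)
        (fun k => projMat (e J (s k J)))]
      have hinner : ∀ i : Fin d,
          ∑ k ∈ Finset.univ.filter (fun k => s k J = i), projMat (e J (s k J))
            = (d : ℕ) • projMat (e J i) := by
        intro i
        rw [Finset.sum_congr rfl (fun m hm => by
          rw [(Finset.mem_filter.mp hm).2])]
        rw [Finset.sum_const]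
        congr 1
        have : Finset.univ.filter (fun k => s k J = i) = L J i := by
          ext m; simp [hmem m J i]
        rw [this, hcard]
      rw [Finset.sum_congr rfl (fun i _ => hinner i), ← Finset.smul_sum,
        sum_projMat_eq_one (e J) (horthb J)]
    calc ∑ k, A k
        = (1/(d:ℂ)) • ((∑ k, ∑ J, projMat (e J (s k J))) - (d^2 : ℕ) • 1) := by
          rw [Finset.sum_congr rfl (fun k _ => hA' k), ← Finset.smul_sum]
          congr 1
          rw [Finset.sum_sub_distrib, Finset.sum_const, Finset.card_univ]
          simp
      _ = (1/(d:ℂ)) • (((d+1) * d : ℕ) • (1 : Matrix (Fin d) (Fin d) ℂ)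
            - (d^2 : ℕ) • 1) := by
          rw [Finset.sum_comm, Finset.sum_congr rfl (fun J _ => hfib J),
            Finset.sum_const, Finset.card_univ, Fintype.card_fin, smul_smul]
      _ = 1 := by
          rw [← Nat.cast_smul_eq_nsmul ℂ, ← Nat.cast_smul_eq_nsmul ℂ, ← sub_smul,
            smul_smul]
          have h1 : (1/(d:ℂ)) * ((((d+1)*d : ℕ) : ℂ) - ((d^2 : ℕ) : ℂ)) = 1 := by
            field_simp
            push_cast
            ring
          rw [h1, one_smul]
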